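/- The extension T_n(k) over Diag_n(k) of upper triangular matrices over the diagonal matrices (n ≥ 2) is not depth two: the centralizer of Diag_n(k) in T_n(k) equals Diag_n(k) and is not a normal subalgebra of T_n(k), since the two-sided ideal I = Σᵢ k e_{1i} of T_n(k) satisfies C(I ∩ B) ≠ (I ∩ B)C. -/

import Mathlib

open TensorProduct LinearMap

noncomputable section

variable {K : Type*} [CommRing K] {A B : Type*} [Ring A] [Ring B] [Algebra K A] [Algebra K B]

/-- Left multiplication by `a` on the first tensorand of `A ⊗[K] A`. -/
def lmulT (a : A) : A ⊗[K] A →ₗ[K] A ⊗[K] A := rTensor A (mulLeft K a)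

/-- Right multiplication by `a` on the second tensorand of `A ⊗[K] A`. -/
def rmulT (a : A) : A ⊗[K] A →ₗ[K] A ⊗[K] A := lTensor A (mulRight K a)

/-- The relations defining `A ⊗_B A` as a quotient of `A ⊗[K] A`; working modulo
`relJ f` amounts to working in the tensor square `A ⊗_B A` of the extension `f`. -/
def relJ (f : B →ₐ[K] A) : Submodule K (A ⊗[K] A) :=
  Submodule.span K {z | ∃ x b y, z = (x * f b) ⊗ₜ[K] y - x ⊗ₜ[K] (f b * y)}

/-- `α` is a `B`-`B`-bimodule endomorphism of `A`. -/
def IsBB (f : B →ₐ[K] A) (α : A →ₗ[K] A) : Prop :=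
  (∀ b x, α (f b * x) = f b * α x) ∧ (∀ b x, α (x * f b) = α x * f b)

/-- `t` represents a `B`-central element of `A ⊗_B A`. -/
def IsCent (f : B →ₐ[K] A) (t : A ⊗[K] A) : Prop :=
  ∀ b, lmulT (K := K) (f b) t - rmulT (f b) t ∈ relJ f

/-- `A ⊗_B A` is isomorphic, as a `B`-`A`-bimodule, to a direct summand of `A^N`
for some positive `N`: there is a split mono `ι` (with splitting `π`), both maps
being `B`-`A`-bimodule maps (everything taken modulo the relations `relJ f`). -/
def LeftD2 (f : B →ₐ[K] A) : Prop :=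
  ∃ N : ℕ, 0 < N ∧ ∃ (ι : A ⊗[K] A →ₗ[K] (Fin N → A)) (π : (Fin N → A) →ₗ[K] A ⊗[K] A),
    (∀ z ∈ relJ f, ι z = 0) ∧
    (∀ b z, ι (lmulT (f b) z) = fun i => f b * ι z i) ∧
    (∀ a z, ι (rmulT a z) = fun i => ι z i * a) ∧
    (∀ b (v : Fin N → A), π (fun i => f b * v i) - lmulT (f b) (π v) ∈ relJ f) ∧
    (∀ a (v : Fin N → A), π (fun i => v i * a) - rmulT a (π v) ∈ relJ f) ∧
    (∀ z, π (ι z) - z ∈ relJ f)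

/-- `A ⊗_B A` is isomorphic, as an `A`-`B`-bimodule, to a direct summand of `A^N`. -/
def RightD2 (f : B →ₐ[K] A) : Prop :=
  ∃ N : ℕ, 0 < N ∧ ∃ (ι : A ⊗[K] A →ₗ[K] (Fin N → A)) (π : (Fin N → A) →ₗ[K] A ⊗[K] A),
    (∀ z ∈ relJ f, ι z = 0) ∧
    (∀ a z, ι (lmulT a z) = fun i => a * ι z i) ∧
    (∀ b z, ι (rmulT (f b) z) = fun i => ι z i * f b) ∧
    (∀ a (v : Fin N → A), π (fun i => a * v i) - lmulT a (π v) ∈ relJ f) ∧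
    (∀ b (v : Fin N → A), π (fun i => v i * f b) - rmulT (f b) (π v) ∈ relJ f) ∧
    (∀ z, π (ι z) - z ∈ relJ f)

/-- `A ⊗_B A` is isomorphic, as an `A`-`A`-bimodule, to a direct summand of `A^N`:
H-separability of the extension `f`. -/
def HSep (f : B →ₐ[K] A) : Prop :=
  ∃ N : ℕ, 0 < N ∧ ∃ (ι : A ⊗[K] A →ₗ[K] (Fin N → A)) (π : (Fin N → A) →ₗ[K] A ⊗[K] A),
    (∀ z ∈ relJ f, ι z = 0) ∧
    (∀ a z, ι (lmulT a z) = fun i => a * ι z i) ∧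
    (∀ a z, ι (rmulT a z) = fun i => ι z i * a) ∧
    (∀ a (v : Fin N → A), π (fun i => a * v i) - lmulT a (π v) ∈ relJ f) ∧
    (∀ a (v : Fin N → A), π (fun i => v i * a) - rmulT a (π v) ∈ relJ f) ∧
    (∀ z, π (ι z) - z ∈ relJ f)


open Matrix

/-- The subalgebra of upper triangular `n × n` matrices. -/
def upperTriangular (k : Type*) [CommRing k] (n : ℕ) :
    Subalgebra k (Matrix (Fin n) (Fin n) k) where
  carrier := {M | M.BlockTriangular (_root_.id : Fin n → Fin n)}
  add_mem' ha hb := ha.add hb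
  mul_mem' ha hb := ha.mul hb
  algebraMap_mem' r := by
    show Matrix.BlockTriangular (Matrix.diagonal fun _ => r) (_root_.id : Fin n → Fin n)
    exact Matrix.blockTriangular_diagonal _

/-- The subalgebra of diagonal `n × n` matrices. -/
def diagonalSub (k : Type*) [CommRing k] (n : ℕ) :
    Subalgebra k (Matrix (Fin n) (Fin n) k) where
  carrier := {M | ∀ i j, i ≠ j → M i j = 0}
  add_mem' := by
    intro M N hM hN i j hij
    show M i j + N i j = 0
    rw [hM i j hij, hN i j hij, add_zero]
  mul_mem' := by
    intro M N hM hN i j hij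
    show ∑ l, M i l * N l j = 0
    refine Finset.sum_eq_zero fun l _ => ?_
    rcases eq_or_ne i l with rfl | h
    · rw [hN i j hij, mul_zero]
    · rw [hM i l h, zero_mul]
  algebraMap_mem' r := by
    intro i j hij
    show Matrix.diagonal (fun _ => r) i j = 0
    exact Matrix.diagonal_apply_ne _ hij

theorem diagonal_le_upperTriangular (k : Type*) [CommRing k] (n : ℕ) :
    diagonalSub k n ≤ upperTriangular k n := by
  intro M hM
  intro i j hij
  exact hM i j (ne_of_lt hij).symm

section AuxMat

open Matrix

variable {k : Type*} [Field k] {n : ℕ}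

lemma diag_mul_comm (M N : Matrix (Fin n) (Fin n) k)
    (hM : ∀ i j, i ≠ j → M i j = 0) (hN : ∀ i j, i ≠ j → N i j = 0) :
    M * N = N * M := by
  ext i j
  rw [Matrix.mul_apply, Matrix.mul_apply]
  rcases eq_or_ne i j with rfl | hij
  · rw [Finset.sum_eq_single i (fun b _ hb => by rw [hM i b (Ne.symm hb), zero_mul])
      (by simp), Finset.sum_eq_single i (fun b _ hb => by rw [hN i b (Ne.symm hb), zero_mul])
      (by simp), mul_comm]
  · refine Eq.trans (Finset.sum_eq_zero fun l _ => ?_) (Finset.sum_eq_zero fun l _ => ?_).symm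
    · rcases eq_or_ne l i with rfl | hl
      · rw [hN l j hij, mul_zero]
      · rw [hM i l (Ne.symm hl), zero_mul]
    · rcases eq_or_ne l i with rfl | hl
      · rw [hM l j hij, mul_zero]
      · rw [hN i l (Ne.symm hl), zero_mul]

lemma mem_ut {i j : Fin n} (h : (i : ℕ) ≤ (j : ℕ)) :
    Matrix.single i j (1 : k) ∈ upperTriangular k n := by
  show Matrix.BlockTriangular _ (_root_.id : Fin n → Fin n)
  intro p q hpq
  apply Matrix.single_apply_of_ne
  rintro ⟨rfl, rfl⟩
  simp only [id_eq, Fin.lt_def] at hpq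
  omega

lemma mem_diag (i : Fin n) : Matrix.single i i (1 : k) ∈ diagonalSub k n := by
  intro p q hpq
  apply Matrix.single_apply_of_ne
  rintro ⟨rfl, rfl⟩
  exact hpq rfl

lemma span_row_le [NeZero n] {M : Matrix (Fin n) (Fin n) k}
    (hM : M ∈ Submodule.span k {M : Matrix (Fin n) (Fin n) k |
      ∃ i : Fin n, M = Matrix.single 0 i (1 : k)}) :
    ∀ p q : Fin n, p ≠ 0 → M p q = 0 := by
  induction hM using Submodule.span_induction with
  | mem x hx =>
    obtain ⟨i, rfl⟩ := hx
    intro p q hp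
    apply Matrix.single_apply_of_ne
    rintro ⟨rfl, rfl⟩
    exact hp rfl
  | zero => intro p q _; rfl
  | add x y _ _ hx hy => intro p q hp; show x p q + y p q = 0; rw [hx p q hp, hy p q hp, add_zero]
  | smul c x _ hx => intro p q hp; show c * x p q = 0; rw [hx p q hp, mul_zero]

lemma row_le_span [NeZero n] {M : Matrix (Fin n) (Fin n) k}
    (hM : ∀ p q : Fin n, p ≠ 0 → M p q = 0) :
    M ∈ Submodule.span k {M : Matrix (Fin n) (Fin n) k |
      ∃ i : Fin n, M = Matrix.single 0 i (1 : k)} := by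
  have hrep : M = ∑ j : Fin n, M 0 j • Matrix.single 0 j (1 : k) := by
    ext p q
    rcases eq_or_ne p 0 with rfl | hp
    · simp [Matrix.sum_apply, Matrix.single, Matrix.smul_apply]
    · rw [hM p q hp]
      simp [Matrix.sum_apply, Matrix.single, Matrix.smul_apply, Ne.symm hp]
  rw [hrep]
  exact Submodule.sum_mem _ fun j _ =>
    Submodule.smul_mem _ _ (Submodule.subset_span ⟨j, rfl⟩)

def entrySub (i j : Fin n) : Submodule k (Matrix (Fin n) (Fin n) k) where
  carrier := {M | M i j = 0}
  add_mem' := by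
    intro a b ha hb
    show a i j + b i j = 0
    rw [ha, hb, add_zero]
  zero_mem' := rfl
  smul_mem' := by
    intro c a ha
    show c • a i j = 0
    rw [ha, smul_zero]

end AuxMat
section NRD2

open Matrix

variable (k : Type*) [Field k] (n : ℕ)

set_option maxHeartbeats 4000000 in
set_option synthInstance.maxHeartbeats 400000 in
lemma not_rightD2 [NeZero n] (hn : 2 ≤ n) :
    ¬ RightD2 (Subalgebra.inclusion (diagonal_le_upperTriangular k n)) := by
  set f := Subalgebra.inclusion (diagonal_le_upperTriangular k n) with hf
  rintro ⟨N, -, ι, π, h0, h1, h2, h3, h4, h5⟩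
  let e : Fin N → (Fin N → ↥(upperTriangular k n)) := fun j => Pi.single j 1
  have he : ∀ j i, e j i = if i = j then 1 else 0 := fun j i => Pi.single_apply j 1 i
  have h2n : 1 < n := lt_of_lt_of_le one_lt_two hn
  let i1 : Fin n := ⟨1, h2n⟩
  have h01 : (0 : Fin n) ≠ i1 := by
    intro h
    have := congrArg Fin.val h
    simp [i1] at this
  let r : ↥(upperTriangular k n) := ⟨Matrix.single 0 0 (1 : k), mem_ut le_rfl⟩
  let a : ↥(upperTriangular k n) := ⟨Matrix.single 0 i1 (1 : k), mem_ut (by simp)⟩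
  let d1 : ↥(diagonalSub k n) := ⟨Matrix.single i1 i1 (1 : k), mem_diag i1⟩
  -- the map x ⊗ y ↦ x * r * y
  let φ : ↥(upperTriangular k n) ⊗[k] ↥(upperTriangular k n) →ₗ[k] ↥(upperTriangular k n) :=
    TensorProduct.lift ((LinearMap.mul k ↥(upperTriangular k n)).comp (LinearMap.mulRight k r))
  have hφt : ∀ x y : ↥(upperTriangular k n), φ (x ⊗ₜ[k] y) = x * r * y := by
    intro x y
    simp [φ, TensorProduct.lift.tmul]
  have hφl : ∀ (c : ↥(upperTriangular k n)) z, φ (lmulT c z) = c * φ z := by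
    intro c z
    induction z using TensorProduct.induction_on with
    | zero => simp [lmulT]
    | tmul x y => simp [lmulT, hφt, mul_assoc]
    | add u w hu hw => simp only [map_add, hu, hw, mul_add]
  have hφr : ∀ (c : ↥(upperTriangular k n)) z, φ (rmulT c z) = φ z * c := by
    intro c z
    induction z using TensorProduct.induction_on with
    | zero => simp [rmulT]
    | tmul x y => simp [rmulT, hφt, mul_assoc]
    | add u w hu hw => simp only [map_add, hu, hw, add_mul]
  have hcomm : ∀ b : ↥(diagonalSub k n), f b * r = r * f b := by
    intro b
    apply Subtype.ext
    exact diag_mul_comm _ _ b.2 (mem_diag 0)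
  have hφJ : ∀ z ∈ relJ f, φ z = 0 := by
    intro z hz
    induction hz using Submodule.span_induction with
    | mem w hw =>
      obtain ⟨x, b, y, rfl⟩ := hw
      rw [map_sub, hφt, hφt, sub_eq_zero, mul_assoc x (f b) r, hcomm b,
        ← mul_assoc x r (f b), mul_assoc (x * r) (f b) y]
    | zero => simp
    | add u w _ _ hu hw => rw [map_add, hu, hw, add_zero]
    | smul c w _ hw => rw [_root_.map_smul, hw, smul_zero]
  set z := (1 : ↥(upperTriangular k n)) ⊗ₜ[k] a with hzdef
  set v := ι z with hv
  -- Step A : z ≡ ∑ j, lmulT (v j) (π (e j)) mod relJ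
  have hA : z - ∑ j, lmulT (v j) (π (e j)) ∈ relJ f := by
    have hvsum : v = ∑ j, (fun i => v j * e j i) := by
      funext i
      rw [Finset.sum_apply]
      simp only [he, mul_ite, mul_one, mul_zero]
      rw [Finset.sum_ite_eq]
      simp
    have hπv : π v - ∑ j, lmulT (v j) (π (e j)) ∈ relJ f := by
      have hps : π v = ∑ j, π (fun i => v j * e j i) := by
        rw [← map_sum]
        exact congrArg π hvsum
      rw [hps, ← Finset.sum_sub_distrib]
      exact Submodule.sum_mem _ fun j _ => h3 (v j) (e j)
    have h5z := h5 z
    rw [← hv] at h5z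
    have hmem2 := Submodule.sub_mem _ hπv h5z
    rwa [sub_sub_sub_cancel_left] at hmem2
  -- Step B : r * a = ∑ j, v j * φ (π (e j))
  have hB : r * a = ∑ j, v j * φ (π (e j)) := by
    have h := hφJ _ hA
    rw [map_sub, sub_eq_zero] at h
    rw [map_sum] at h
    have hza : φ z = r * a := by rw [hzdef, hφt, one_mul]
    rw [hza] at h
    rw [h]
    exact Finset.sum_congr rfl fun j _ => hφl (v j) (π (e j))
  -- rows ≠ 0 of φ w vanish
  have hrow : ∀ (w : ↥(upperTriangular k n) ⊗[k] ↥(upperTriangular k n)) (l : Fin n), l ≠ 0 →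
      ∀ m, ((φ w : ↥(upperTriangular k n)) : Matrix (Fin n) (Fin n) k) l m = 0 := by
    intro w
    induction w using TensorProduct.induction_on with
    | zero => intro l _ m; simp
    | tmul x y =>
      intro l hl m
      rw [hφt]
      have hxy : ((x * r * y : ↥(upperTriangular k n)) : Matrix (Fin n) (Fin n) k)
          = ((x : Matrix (Fin n) (Fin n) k) * Matrix.single 0 0 (1 : k)
            * (y : Matrix (Fin n) (Fin n) k)) := rfl
      rw [hxy, Matrix.mul_apply]
      refine Finset.sum_eq_zero fun p _ => ?_
      rcases eq_or_ne p 0 with rfl | hp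
      · rw [Matrix.mul_single_apply_same]
        have hx0 : (x : Matrix (Fin n) (Fin n) k) l 0 = 0 := by
          have hx := x.2
          exact hx (show _root_.id (0 : Fin n) < _root_.id l by
            simp only [id_eq, Fin.lt_def, Fin.val_zero]
            exact Nat.pos_of_ne_zero fun hh => hl (Fin.ext (by simp [hh])))
        rw [hx0, zero_mul, zero_mul]
      · rw [Matrix.mul_single_apply_of_ne (hbj := hp), zero_mul]
    | add u w hu hw =>
      intro l hl m
      rw [map_add]
      show ((φ u : ↥(upperTriangular k n)) : Matrix (Fin n) (Fin n) k) l m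
        + ((φ w : ↥(upperTriangular k n)) : Matrix (Fin n) (Fin n) k) l m = 0
      rw [hu l hl m, hw l hl m, add_zero]
  -- each φ (π (e j)) commutes with the diagonal matrix e_{11}
  have hcent : ∀ j, f d1 * φ (π (e j)) = φ (π (e j)) * f d1 := by
    intro j
    have e1 : π (fun i => f d1 * e j i)
        - lmulT (f d1) (π (e j)) ∈ relJ f := h3 (f d1) (e j)
    have e2 : π (fun i => e j i * f d1)
        - rmulT (f d1) (π (e j)) ∈ relJ f := h4 d1 (e j)
    have hveq : (fun i => f d1 * e j i) = fun i => e j i * f d1 := by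
      funext i
      simp only [he, mul_ite, ite_mul, mul_one, one_mul, mul_zero, zero_mul]
    rw [hveq] at e1
    have hmem : lmulT (f d1) (π (e j)) - rmulT (f d1) (π (e j)) ∈ relJ f := by
      have h := Submodule.sub_mem _ e2 e1
      rwa [sub_sub_sub_cancel_left] at h
    have h := hφJ _ hmem
    rw [map_sub, hφl, hφr, sub_eq_zero] at h
    exact h
  -- column i1 of each φ (π (e j)) vanishes
  have hscol : ∀ j l, ((φ (π (e j)) : ↥(upperTriangular k n)) : Matrix (Fin n) (Fin n) k) l i1
      = 0 := by
    intro j l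
    rcases eq_or_ne l 0 with rfl | hl
    · have h := hcent j
      have hcoe : Matrix.single i1 i1 (1 : k)
            * ((φ (π (e j)) : ↥(upperTriangular k n)) : Matrix (Fin n) (Fin n) k) =
          ((φ (π (e j)) : ↥(upperTriangular k n)) : Matrix (Fin n) (Fin n) k)
            * Matrix.single i1 i1 (1 : k) := congrArg Subtype.val h
      have h3' := congrArg (fun M : Matrix (Fin n) (Fin n) k => M 0 i1) hcoe
      change (Matrix.single i1 i1 (1 : k) * _ : Matrix (Fin n) (Fin n) k) 0 i1
        = (_ * Matrix.single i1 i1 (1 : k) : Matrix (Fin n) (Fin n) k) 0 i1 at h3'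
      rw [Matrix.single_mul_apply_of_ne (h := h01),
        Matrix.mul_single_apply_same, mul_one] at h3'
      exact h3'.symm
    · exact hrow (π (e j)) l hl i1
  -- contradiction at entry (0, i1)
  have hlhs : ((r * a : ↥(upperTriangular k n)) : Matrix (Fin n) (Fin n) k) 0 i1 = 1 := by
    have hra : ((r * a : ↥(upperTriangular k n)) : Matrix (Fin n) (Fin n) k)
        = Matrix.single (0 : Fin n) 0 (1 : k) * Matrix.single (0 : Fin n) i1 (1 : k) := rfl
    rw [hra, Matrix.single_mul_single_same, one_mul, Matrix.single_apply_same]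
  have hrhs : ((∑ j, v j * φ (π (e j)) : ↥(upperTriangular k n)) : Matrix (Fin n) (Fin n) k) 0 i1
      = 0 := by
    have hcoe : ((∑ j, v j * φ (π (e j)) : ↥(upperTriangular k n)) : Matrix (Fin n) (Fin n) k) =
        ∑ j, ((v j : Matrix (Fin n) (Fin n) k)
          * ((φ (π (e j)) : ↥(upperTriangular k n)) : Matrix (Fin n) (Fin n) k)) := by
      rw [AddSubmonoidClass.coe_finset_sum]
      simp only [MulMemClass.coe_mul]
    rw [hcoe, Matrix.sum_apply]
    refine Finset.sum_eq_zero fun j _ => ?_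
    rw [Matrix.mul_apply]
    exact Finset.sum_eq_zero fun p _ => by rw [hscol j p, mul_zero]
  rw [hB, hrhs] at hlhs
  exact one_ne_zero hlhs.symm

end NRD2
/-- the extension `T_n(k) | Diag_n(k)` (`n ≥ 2`) is not depth two: the
centralizer of `Diag_n(k)` in `T_n(k)` equals `Diag_n(k)`, which is not a normal
subalgebra of `T_n(k)` since the two-sided ideal `I = Σᵢ k·e_{1i}` of `T_n(k)`
satisfies `C(I ∩ B) ≠ (I ∩ B)C`. -/
theorem triangular_over_diagonal_not_d2 (k : Type*) [Field k] (n : ℕ) [NeZero n]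
    (hn : 2 ≤ n) :
    letI C' := upperTriangular k n
    letI B' := diagonalSub k n
    letI I : Submodule k (Matrix (Fin n) (Fin n) k) :=
      Submodule.span k {M | ∃ i : Fin n, M = Matrix.single 0 i (1 : k)}
    -- the centralizer of `B` in `C` is `B` itself
    ((∀ x ∈ C', ((∀ b ∈ B', b * x = x * b) ↔ x ∈ B')) ∧
    -- `I` is a two-sided ideal of `C` contained in `C`
    (I ≤ Subalgebra.toSubmodule C' ∧
      ∀ c ∈ C', ∀ x ∈ I, c * x ∈ I ∧ x * c ∈ I) ∧
    -- the contracted ideal is not `C`-invariant: `C(I ∩ B) ≠ (I ∩ B)C`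
    (Subalgebra.toSubmodule C' * (I ⊓ Subalgebra.toSubmodule B') ≠
      (I ⊓ Subalgebra.toSubmodule B') * Subalgebra.toSubmodule C') ∧
    -- hence `C | B` is not depth two
    ¬ (LeftD2 (Subalgebra.inclusion (diagonal_le_upperTriangular k n)) ∧
        RightD2 (Subalgebra.inclusion (diagonal_le_upperTriangular k n)))) := by
  have h2n : 1 < n := lt_of_lt_of_le one_lt_two hn
  have hi1 : (⟨1, h2n⟩ : Fin n) ≠ 0 := by
    intro hh
    have := congrArg Fin.val hh
    simp at this
  refine ⟨?_, ⟨?_, ?_⟩, ?_, ?_⟩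
  · -- centralizer of diagonal in upper triangular is the diagonal
    intro x hx
    constructor
    · intro h i j hij
      exact Matrix.row_eq_zero_of_commute_single
        (show Commute (Matrix.single i i (1 : k)) x from h _ (mem_diag i)) (Ne.symm hij)
    · intro hx' b hb
      exact diag_mul_comm b x hb hx'
  · -- I ⊆ C
    rw [Submodule.span_le]
    rintro M ⟨i, rfl⟩
    exact mem_ut (by simp)
  · -- I is a two-sided ideal of C
    intro c hc x hxI
    have hx0 := span_row_le hxI
    constructor
    · apply row_le_span
      intro p q hp
      rw [Matrix.mul_apply]
      refine Finset.sum_eq_zero fun l _ => ?_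
      rcases eq_or_ne l 0 with rfl | hl
      · have hcp : c p (0 : Fin n) = 0 := hc (show _root_.id (0 : Fin n) < _root_.id p by
          simp only [id_eq, Fin.lt_def, Fin.val_zero]
          exact Nat.pos_of_ne_zero fun hh => hp (Fin.ext (by simp [hh])))
        rw [hcp, zero_mul]
      · rw [hx0 l q hl, mul_zero]
    · apply row_le_span
      intro p q hp
      rw [Matrix.mul_apply]
      exact Finset.sum_eq_zero fun l _ => by rw [hx0 p l hp, zero_mul]
  · -- C(I ∩ B) ≠ (I ∩ B)C
    intro heq
    have hmemR : Matrix.single (0 : Fin n) ⟨1, h2n⟩ (1 : k) ∈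
        (Submodule.span k {M : Matrix (Fin n) (Fin n) k |
            ∃ i : Fin n, M = Matrix.single 0 i (1 : k)}
          ⊓ Subalgebra.toSubmodule (diagonalSub k n))
          * Subalgebra.toSubmodule (upperTriangular k n) := by
      have h00 : Matrix.single (0 : Fin n) 0 (1 : k) ∈
          (Submodule.span k {M : Matrix (Fin n) (Fin n) k |
              ∃ i : Fin n, M = Matrix.single 0 i (1 : k)}
            ⊓ Subalgebra.toSubmodule (diagonalSub k n)) :=
        ⟨Submodule.subset_span ⟨0, rfl⟩, mem_diag 0⟩
      have h01m : Matrix.single (0 : Fin n) ⟨1, h2n⟩ (1 : k) ∈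
          Subalgebra.toSubmodule (upperTriangular k n) := mem_ut (by simp)
      have hh := Submodule.mul_mem_mul h00 h01m
      rwa [Matrix.single_mul_single_same, one_mul] at hh
    rw [← heq] at hmemR
    have hle : Subalgebra.toSubmodule (upperTriangular k n) *
        (Submodule.span k {M : Matrix (Fin n) (Fin n) k |
            ∃ i : Fin n, M = Matrix.single 0 i (1 : k)}
          ⊓ Subalgebra.toSubmodule (diagonalSub k n)) ≤ entrySub 0 ⟨1, h2n⟩ := by
      rw [Submodule.mul_le]
      intro m _ y hy
      obtain ⟨hyI, hyB⟩ := hy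
      show (m * y) 0 ⟨1, h2n⟩ = 0
      rw [Matrix.mul_apply]
      refine Finset.sum_eq_zero fun l _ => ?_
      have hyy : y l (⟨1, h2n⟩ : Fin n) = 0 := by
        rcases eq_or_ne l (⟨1, h2n⟩ : Fin n) with hl | hl
        · rw [hl]
          exact span_row_le hyI _ _ hi1
        · exact hyB l _ hl
      rw [hyy, mul_zero]
    have hfin := hle hmemR
    have hz : Matrix.single (0 : Fin n) (⟨1, h2n⟩ : Fin n) (1 : k) (0 : Fin n)
        (⟨1, h2n⟩ : Fin n) = 0 := hfin
    rw [Matrix.single_apply_same] at hz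
    exact one_ne_zero hz
  · -- not depth two
    rintro ⟨-, hR⟩
    exact not_rightD2 k n hn hR

end
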